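/- The dicotic transformation δ does not respect game equivalence: although the games {1 | } and {1, 0 | } are equal (both equal 2), their images δ({1 | }) = {↓ | 0} and δ({1, 0 | }) = {↓, * | 0} are not equal as games; in fact the difference {↓ | 0} − {↓, * | 0} is a Right-player win (strictly negative or Right wins moving second and first, i.e., the difference is < 0 in outcome terms: o({↓ | 0} − {↓, * | 0}) = R). -/

import Mathlib

namespace SetTheory

universe u

/-- Combinatorial pre-games, as in the older Mathlib (removed from Mathlib since). -/
inductive PGame : Type (u + 1)
  | mk : ∀ α β : Type u, (α → PGame) → (β → PGame) → PGame

namespace PGame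

def LeftMoves : PGame.{u} → Type u
  | mk l _ _ _ => l

def RightMoves : PGame.{u} → Type u
  | mk _ r _ _ => r

def moveLeft : ∀ g : PGame.{u}, LeftMoves g → PGame.{u}
  | mk _l _ L _ => L

def moveRight : ∀ g : PGame.{u}, RightMoves g → PGame.{u}
  | mk _ _r _ R => R

def ofLists (L R : List PGame.{u}) : PGame.{u} :=
  mk (ULift (Fin L.length)) (ULift (Fin R.length)) (fun i => L.get i.down) fun j => R.get j.down

inductive IsOption : PGame.{u} → PGame.{u} → Prop
  | moveLeft {x : PGame.{u}} (i : x.LeftMoves) : IsOption (x.moveLeft i) x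
  | moveRight {x : PGame.{u}} (i : x.RightMoves) : IsOption (x.moveRight i) x

theorem wf_isOption : WellFounded (@IsOption.{u}) :=
  ⟨fun x => by
    induction x with
    | mk l r L R IHl IHr =>
      refine ⟨_, fun y h => ?_⟩
      cases h with
      | moveLeft i => exact IHl i
      | moveRight j => exact IHr j⟩

instance : WellFoundedRelation PGame.{u} := ⟨IsOption, wf_isOption⟩

instance : Zero PGame.{u} := ⟨⟨PEmpty, PEmpty, PEmpty.elim, PEmpty.elim⟩⟩

instance : One PGame.{u} := ⟨⟨PUnit, PEmpty, fun _ => 0, PEmpty.elim⟩⟩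

def star : PGame.{u} := ⟨PUnit, PUnit, fun _ => 0, fun _ => 0⟩

def neg : PGame.{u} → PGame.{u}
  | mk l r L R => mk r l (fun i => neg (R i)) fun i => neg (L i)

instance : Neg PGame.{u} := ⟨neg⟩

def addAux (xl xr : Type u) (IHl : xl → PGame.{u} → PGame.{u}) (IHr : xr → PGame.{u} → PGame.{u}) :
    PGame.{u} → PGame.{u}
  | mk yl yr yL yR =>
    mk (xl ⊕ yl) (xr ⊕ yr)
      (Sum.rec (fun i => IHl i (mk yl yr yL yR)) fun i => addAux xl xr IHl IHr (yL i))
      (Sum.rec (fun i => IHr i (mk yl yr yL yR)) fun i => addAux xl xr IHl IHr (yR i))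

def add : PGame.{u} → PGame.{u} → PGame.{u}
  | mk xl xr xL xR => addAux xl xr (fun i => add (xL i)) fun i => add (xR i)

instance : Add PGame.{u} := ⟨add⟩

instance : Sub PGame.{u} := ⟨fun x y => x + -y⟩

def leLFAux (xl xr : Type u) (IHl : xl → PGame.{u} → Prop × Prop)
    (IHr : xr → PGame.{u} → Prop × Prop) : PGame.{u} → Prop × Prop
  | mk yl yr yL yR =>
    ((∀ i, (IHl i (mk yl yr yL yR)).2) ∧ ∀ j, (leLFAux xl xr IHl IHr (yR j)).2,
     (∃ i, (leLFAux xl xr IHl IHr (yL i)).1) ∨ ∃ j, (IHr j (mk yl yr yL yR)).1)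

/-- `(leLF x y).1` is `x ≤ y` and `(leLF x y).2` is `x ⧏ y`, as in the older Mathlib. -/
def leLF : PGame.{u} → PGame.{u} → Prop × Prop
  | mk xl xr xL xR => leLFAux xl xr (fun i => leLF (xL i)) fun j => leLF (xR j)

instance : LE PGame.{u} := ⟨fun x y => (leLF x y).1⟩

instance : LT PGame.{u} := ⟨fun x y => x ≤ y ∧ ¬ y ≤ x⟩

instance : HasEquiv PGame.{u} := ⟨fun x y => x ≤ y ∧ y ≤ x⟩

end PGame

end SetTheory

universe u
open SetTheory PGame
open scoped PGame

/-- The game up, ↑ = {0 | *}. -/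
def upG : PGame := ofLists [0] [star]

/-- The game down, ↓ = {* | 0}. -/
def downG : PGame := ofLists [star] [0]

/-- `copies n G` is the disjunctive sum of `n` copies of `G`. -/
def copies : ℕ → PGame → PGame
  | 0, _ => 0
  | n + 1, G => copies n G + G

/-- A game is dicotic (all-small) if either it has no options for either player, or
both players have at least one option and every option is dicotic. -/
def Dicotic (G : PGame) : Prop :=
  (IsEmpty G.LeftMoves ∧ IsEmpty G.RightMoves ∨
    Nonempty G.LeftMoves ∧ Nonempty G.RightMoves) ∧
    (∀ i, Dicotic (G.moveLeft i)) ∧ ∀ j, Dicotic (G.moveRight j)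
termination_by G
decreasing_by
  all_goals first
    | exact PGame.IsOption.moveLeft _
    | exact PGame.IsOption.moveRight _

/-- The dicotic transformation δ: every empty option set is replaced by the single option 0. -/
def delta : PGame → PGame
  | PGame.mk l r L R =>
    PGame.mk (l ⊕ PLift (IsEmpty l)) (r ⊕ PLift (IsEmpty r))
      (Sum.rec (fun i => delta (L i)) fun _ => 0)
      (Sum.rec (fun j => delta (R j)) fun _ => 0)

/-- A game is infinitesimal if every positive multiple lies strictly between -1 and 1. -/
def Infinitesimal (G : PGame) : Prop :=
  ∀ n : ℕ, 0 < n → copies n G < 1 ∧ -1 < copies n G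


theorem g_le_mk {xl xr yl yr : Type u} {xL : xl → PGame.{u}} {xR : xr → PGame.{u}}
    {yL : yl → PGame.{u}} {yR : yr → PGame.{u}} :
    PGame.mk xl xr xL xR ≤ PGame.mk yl yr yL yR ↔
      (∀ i, (leLF (xL i) (PGame.mk yl yr yL yR)).2) ∧ ∀ j, (leLF (PGame.mk xl xr xL xR) (yR j)).2 :=
  Iff.rfl

theorem g_lf_mk {xl xr yl yr : Type u} {xL : xl → PGame.{u}} {xR : xr → PGame.{u}}
    {yL : yl → PGame.{u}} {yR : yr → PGame.{u}} :
    (leLF (PGame.mk xl xr xL xR) (PGame.mk yl yr yL yR)).2 ↔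
      (∃ i, PGame.mk xl xr xL xR ≤ yL i) ∨ ∃ j, xR j ≤ PGame.mk yl yr yL yR :=
  Iff.rfl

theorem g_leLF_fst (x y : PGame.{u}) : (leLF x y).1 ↔ x ≤ y := Iff.rfl

theorem g_equiv_iff (x y : PGame.{u}) : x ≈ y ↔ x ≤ y ∧ y ≤ x := Iff.rfl

theorem g_lt_iff (x y : PGame.{u}) : x < y ↔ x ≤ y ∧ ¬ y ≤ x := Iff.rfl

theorem g_zero_def : (0 : PGame.{u}) = PGame.mk PEmpty PEmpty PEmpty.elim PEmpty.elim := rfl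

theorem g_one_def : (1 : PGame.{u}) = PGame.mk PUnit PEmpty (fun _ => 0) PEmpty.elim := rfl

theorem g_star_def : (star : PGame.{u}) = PGame.mk PUnit PUnit (fun _ => 0) (fun _ => 0) := rfl

universe v in
theorem g_isEmpty_pempty : IsEmpty PEmpty.{v + 1} ↔ True := iff_of_true inferInstance trivial

theorem g_isEmpty_fin0 : IsEmpty (Fin 0) ↔ True := iff_of_true inferInstance trivial

theorem g_sub_def (x y : PGame.{u}) : x - y = x + -y := rfl

theorem g_neg_mk {xl xr : Type u} {xL : xl → PGame.{u}} {xR : xr → PGame.{u}} :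
    -(PGame.mk xl xr xL xR) = PGame.mk xr xl (fun i => -(xR i)) (fun i => -(xL i)) := rfl

theorem g_add_mk {xl xr yl yr : Type u} {xL : xl → PGame.{u}} {xR : xr → PGame.{u}}
    {yL : yl → PGame.{u}} {yR : yr → PGame.{u}} :
    PGame.mk xl xr xL xR + PGame.mk yl yr yL yR =
      PGame.mk (xl ⊕ yl) (xr ⊕ yr)
        (Sum.rec (fun i => xL i + PGame.mk yl yr yL yR) fun i => PGame.mk xl xr xL xR + yL i)
        (Sum.rec (fun i => xR i + PGame.mk yl yr yL yR) fun i => PGame.mk xl xr xL xR + yR i) := rfl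

theorem g_delta_mk {l r : Type u} {L : l → PGame.{u}} {R : r → PGame.{u}} :
    delta (PGame.mk l r L R) =
      PGame.mk (l ⊕ PLift (IsEmpty l)) (r ⊕ PLift (IsEmpty r))
        (Sum.rec (fun i => delta (L i)) fun _ => 0)
        (Sum.rec (fun j => delta (R j)) fun _ => 0) := by
  rw [delta]

theorem stmt9 :
    (ofLists [1] [] ≈ ofLists [1, 0] []) ∧
    (delta (ofLists [1] []) ≈ ofLists [downG] [0]) ∧
    (delta (ofLists [1, 0] []) ≈ ofLists [downG, star] [0]) ∧
    ¬ (delta (ofLists [1] []) ≈ delta (ofLists [1, 0] [])) ∧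
    ofLists [downG] [0] - ofLists [downG, star] [0] < 0 := by
  simp only [g_equiv_iff, g_lt_iff, g_sub_def]
  refine ⟨⟨?_, ?_⟩, ⟨?_, ?_⟩, ⟨?_, ?_⟩, ?_, ?_, ?_⟩ <;>
  simp [g_le_mk, g_lf_mk, g_zero_def, g_one_def, g_star_def, g_neg_mk, g_add_mk,
    g_delta_mk, ofLists, downG, g_isEmpty_pempty, g_isEmpty_fin0, Sum.forall, Sum.exists, PLift.forall, PLift.exists]
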